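/- Let A ∈ ℝ^{m×n} and let S ∈ ℝ^{m×k} have the same column space as A (range(S) = range(A)). Then for all p₁, p₂ ∈ ℝ^n, Sᵀ A p₁ = Sᵀ A p₂ implies A p₁ = A p₂ (equivalently, Sᵀ A and A have the same null space). Consequently, for any matrix B with Bᵀ B positive definite, any x ∈ ℝ^n and b ∈ ℝ^m with residual r = b − A x, the quantity rᵀ A p is constant over the feasible set F = { p ∈ ℝ^n : Sᵀ A (x + p) = Sᵀ b }, and hence p* ∈ F minimizes ½‖B p‖₂² − rᵀ A p over F if and only if p* minimizes ½‖B p‖₂² over F. -/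
import Mathlib


open Matrix

/-- If the sketch `S` has the same column space as `A`, then `Sᵀ A` and `A` have
the same null space; consequently `rᵀ A p` is constant over the feasible set
`F = {p : Sᵀ A (x + p) = Sᵀ b}`, and minimizing `½‖Bp‖² − rᵀ A p` over `F` is
equivalent to minimizing `½‖Bp‖²` over `F`. -/
theorem stmt16 (m n k q : ℕ)
    (A : Matrix (Fin m) (Fin n) ℝ)
    (S : Matrix (Fin m) (Fin k) ℝ)
    (hrange : LinearMap.range S.mulVecLin = LinearMap.range A.mulVecLin)
    (B : Matrix (Fin q) (Fin n) ℝ) (hB : (Bᵀ * B).PosDef) :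
    (∀ p₁ p₂ : Fin n → ℝ,
      (Sᵀ * A).mulVec p₁ = (Sᵀ * A).mulVec p₂ → A.mulVec p₁ = A.mulVec p₂) ∧
    (∀ x : Fin n → ℝ, ∀ b : Fin m → ℝ, ∀ r : Fin m → ℝ, r = b - A.mulVec x →
      (∀ p p' : Fin n → ℝ,
        (Sᵀ * A).mulVec (x + p) = Sᵀ.mulVec b →
        (Sᵀ * A).mulVec (x + p') = Sᵀ.mulVec b →
        r ⬝ᵥ A.mulVec p = r ⬝ᵥ A.mulVec p') ∧
      (∀ pstar : Fin n → ℝ, (Sᵀ * A).mulVec (x + pstar) = Sᵀ.mulVec b →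
        ((∀ p : Fin n → ℝ, (Sᵀ * A).mulVec (x + p) = Sᵀ.mulVec b →
            (1 / 2) * (B.mulVec pstar ⬝ᵥ B.mulVec pstar) - r ⬝ᵥ A.mulVec pstar ≤
              (1 / 2) * (B.mulVec p ⬝ᵥ B.mulVec p) - r ⬝ᵥ A.mulVec p) ↔
          (∀ p : Fin n → ℝ, (Sᵀ * A).mulVec (x + p) = Sᵀ.mulVec b →
            (1 / 2) * (B.mulVec pstar ⬝ᵥ B.mulVec pstar) ≤
              (1 / 2) * (B.mulVec p ⬝ᵥ B.mulVec p))))) := by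

  have key : ∀ p₁ p₂ : Fin n → ℝ,
      (Sᵀ * A).mulVec p₁ = (Sᵀ * A).mulVec p₂ → A.mulVec p₁ = A.mulVec p₂ := by
    intro p₁ p₂ h
    have hmem : A.mulVec (p₁ - p₂) ∈ LinearMap.range S.mulVecLin := by
      rw [hrange]; exact ⟨p₁ - p₂, rfl⟩
    obtain ⟨c, hc⟩ := hmem
    have hST : Sᵀ.mulVec (A.mulVec (p₁ - p₂)) = 0 := by
      have h1 : (Sᵀ * A).mulVec (p₁ - p₂) = 0 := by
        rw [mulVec_sub, h, sub_self]
      rw [mulVec_mulVec]; exact h1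
    set v := A.mulVec (p₁ - p₂) with hv
    have hc' : S.mulVec c = v := by simpa [mulVecLin_apply] using hc
    have hvv : v ⬝ᵥ v = 0 := calc
      v ⬝ᵥ v = v ⬝ᵥ (S *ᵥ c) := by rw [hc']
      _ = (v ᵥ* S) ⬝ᵥ c := dotProduct_mulVec _ _ _
      _ = (Sᵀ *ᵥ v) ⬝ᵥ c := by rw [mulVec_transpose]
      _ = 0 := by rw [hST, zero_dotProduct]
    have hv0 : v = 0 := dotProduct_self_eq_zero.mp hvv
    have : A.mulVec p₁ - A.mulVec p₂ = 0 := by rw [← mulVec_sub]; exact hv0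
    exact sub_eq_zero.mp this
  refine ⟨key, ?_⟩
  intro x b r hr
  have hconst : ∀ p p' : Fin n → ℝ,
      (Sᵀ * A).mulVec (x + p) = Sᵀ.mulVec b →
      (Sᵀ * A).mulVec (x + p') = Sᵀ.mulVec b →
      r ⬝ᵥ A.mulVec p = r ⬝ᵥ A.mulVec p' := by
    intro p p' hp hp'
    have : A.mulVec p = A.mulVec p' := by
      have h := key (x + p) (x + p') (hp.trans hp'.symm)
      have := congrArg (fun v => v - A.mulVec x) (by rwa [mulVec_add, mulVec_add] at h :
        A.mulVec x + A.mulVec p = A.mulVec x + A.mulVec p')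
      simpa using this
    rw [this]
  refine ⟨hconst, ?_⟩
  intro pstar hps
  constructor
  · intro h p hp
    have := h p hp
    have hc := hconst pstar p hps hp
    linarith
  · intro h p hp
    have := h p hp
    have hc := hconst pstar p hps hp
    linarith
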